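/- Let v_k be an inductive valuation of K[x] with key polynomial φ_k, let g be a key polynomial over v_k which is homogeneous in v_k, with φ_k-adic expansion g = Σ_{i=0}^r a_i φ_k^i (a_r = 1, deg a_i < deg φ_k), and let e ≥ 1. Define c_i = Σ (e choose l₀,...,l_r) a₀^{l₀} a₁^{l₁} ⋯ a_r^{l_r}, where the sum is over (l₀,...,l_r) ∈ ℕ^{r+1} with Σ l_j = e and Σ j·l_j = i. Then g^e = Σ_{i=0}^{re} c_i φ_k^i, and v_k(g^e) = min_i {v_{k-1}(c_i) + i·v_k(φ_k)} = min_i {v_k(c_i) + i·v_k(φ_k)}. -/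

import Mathlib

open Polynomial

variable {K : Type*} [Field K] {Γ : Type*} [AddCommGroup Γ] [LinearOrder Γ] [IsOrderedAddMonoid Γ]

/-- `g ∼_w h` : equivalence in the (pseudo-)valuation `w` (MacLane). -/
def EquivV {R : Type*} [CommRing R] (w : AddValuation R (WithTop Γ)) (g h : R) : Prop :=
  min (w g) (w h) < w (g - h) ∨ (w g = ⊤ ∧ w h = ⊤)

/-- `φ` equivalence-divides `g` in `w`. -/
def EqDvd {R : Type*} [CommRing R] (w : AddValuation R (WithTop Γ)) (φ g : R) : Prop :=
  ∃ a : R, EquivV w g (a * φ)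

/-- `φ` is equivalence irreducible in `w`. -/
def EqIrred {R : Type*} [CommRing R] (w : AddValuation R (WithTop Γ)) (φ : R) : Prop :=
  ∀ a b : R, EqDvd w φ (a * b) → EqDvd w φ a ∨ EqDvd w φ b

/-- `φ` is minimal in `w`. -/
def MinimalV (w : AddValuation (Polynomial K) (WithTop Γ)) (φ : Polynomial K) : Prop :=
  ∀ g : Polynomial K, g ≠ 0 → EqDvd w φ g → φ.degree ≤ g.degree

/-- `φ` is a key polynomial over `w`. -/
def KeyOver (w : AddValuation (Polynomial K) (WithTop Γ)) (φ : Polynomial K) : Prop :=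
  φ.Monic ∧ 0 < φ.degree ∧ EqIrred w φ ∧ MinimalV w φ

/-- `w = [u; w φ = μ]` is the augmented (inductive) valuation of MacLane: on the `φ`-adic
expansion `g = Σ cᵢ φ^i` (with `deg cᵢ < deg φ`) one has `w g = min ᵢ (u cᵢ + i μ)`. -/
def IsAugmentation (u w : AddValuation (Polynomial K) (WithTop Γ)) (φ : Polynomial K)
    (μ : WithTop Γ) : Prop :=
  w φ = μ ∧
  ∀ (g : Polynomial K) (n : ℕ) (c : ℕ → Polynomial K),
    (∀ i, (c i).degree < φ.degree) → g = ∑ i ∈ Finset.range n, c i * φ ^ i →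
    w g = (Finset.range n).inf fun i => u (c i) + i • μ

/-- The coefficients of the `φ`-adic expansion: `phiCoeff φ i g` is the coefficient of `φ^i`. -/
noncomputable def phiCoeff (φ : Polynomial K) : ℕ → Polynomial K → Polynomial K
  | 0, g => g %ₘ φ
  | (i+1), g => phiCoeff φ i (g /ₘ φ)

/-- The self-computation (inductiveness) property: `w` computes values of `φ`-adic
expansions as the min of the values of the terms. -/
def ExpansionInf (w : AddValuation (Polynomial K) (WithTop Γ)) (φ : Polynomial K) : Prop :=
  ∀ (g : Polynomial K) (n : ℕ) (c : ℕ → Polynomial K),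
    (∀ i, (c i).degree < φ.degree) → g = ∑ i ∈ Finset.range n, c i * φ ^ i →
    w g = (Finset.range n).inf fun i => w (c i * φ ^ i)

/-- Effective degree `D_φ(g)` with respect to `w`. -/
noncomputable def effDeg (w : AddValuation (Polynomial K) (WithTop Γ)) (φ g : Polynomial K) : ℕ :=
  sSup {i : ℕ | w g = w (phiCoeff φ i g * φ ^ i)}


private lemma addval_prod {R : Type*} [CommRing R] {Γ₀ : Type*}
    [LinearOrderedAddCommMonoidWithTop Γ₀] (v : AddValuation R Γ₀) {ι : Type*}
    (s : Finset ι) (f : ι → R) : v (∏ i ∈ s, f i) = ∑ i ∈ s, v (f i) := by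
  classical
  induction s using Finset.cons_induction with
  | empty => simp [v.map_one]
  | cons a s ha ih => rw [Finset.prod_cons, Finset.sum_cons, v.map_mul, ih]

/-- Let `w = [u; w φ = μ]` be an inductive valuation of `K[x]` with key
polynomial `φ`, let `g` be a key polynomial over `w` which is homogeneous in `w`, with
`φ`-adic expansion `g = Σ_{i≤r} aᵢ φ^i` (`a_r = 1`, `deg aᵢ < deg φ`), and let `e ≥ 1`.
With `cᵢ = Σ (e choose l₀,…,l_r) a₀^{l₀} ⋯ a_r^{l_r}` (sum over tuples with `Σ lⱼ = e` and
`Σ j·lⱼ = i`), one has `g^e = Σ_{i≤re} cᵢ φ^i` and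
`w (g^e) = minᵢ (u cᵢ + i·(w φ)) = minᵢ (w cᵢ + i·(w φ))`. -/
theorem stmt_15 {K : Type*} [Field K] {Γ : Type*} [AddCommGroup Γ] [LinearOrder Γ] [IsOrderedAddMonoid Γ]
    (u w : AddValuation (Polynomial K) (WithTop Γ)) (φ : Polynomial K) (μ : WithTop Γ)
    (hkeyφ : KeyOver u φ) (hμ : u φ < μ) (haug : IsAugmentation u w φ μ)
    (r e : ℕ) (he : 1 ≤ e)
    (a : ℕ → Polynomial K) (har : a r = 1) (hdeg : ∀ i, (a i).degree < φ.degree)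
    (g : Polynomial K) (hg : g = ∑ i ∈ Finset.range (r + 1), a i * φ ^ i)
    (hkeyg : KeyOver w g)
    (hhom : ∀ i ∈ Finset.range (r + 1), a i ≠ 0 → w (a i * φ ^ i) = w g)
    (c : ℕ → Polynomial K)
    (hc : ∀ i, c i =
      ∑ l ∈ (Finset.Nat.antidiagonalTuple (r + 1) e).filter
          (fun l => ∑ j : Fin (r + 1), (j : ℕ) * l j = i),
        (Nat.multinomial Finset.univ l : Polynomial K) * ∏ j : Fin (r + 1), a (j : ℕ) ^ l j) :
    g ^ e = ∑ i ∈ Finset.range (r * e + 1), c i * φ ^ i ∧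
    w (g ^ e) = (Finset.range (r * e + 1)).inf (fun i => u (c i) + i • w φ) ∧
    w (g ^ e) = (Finset.range (r * e + 1)).inf (fun i => w (c i) + i • w φ) := by
  obtain ⟨hwφ, hexp⟩ := haug
  -- w agrees with u on low-degree polynomials
  have hwu : ∀ h : Polynomial K, h.degree < φ.degree → w h = u h := by
    intro h hh
    have h2 := hexp h 1 (fun _ => h) (fun _ => hh) (by simp)
    simpa using h2
  -- the expansion identity
  have hgsum : g = ∑ j : Fin (r + 1), a (j : ℕ) * φ ^ (j : ℕ) := by
    rw [hg, ← Fin.sum_univ_eq_sum_range]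
  have hmaps : ∀ l ∈ Finset.Nat.antidiagonalTuple (r + 1) e,
      (∑ j : Fin (r + 1), (j : ℕ) * l j) ∈ Finset.range (r * e + 1) := by
    intro l hl
    rw [Finset.Nat.mem_antidiagonalTuple] at hl
    rw [Finset.mem_range, Nat.lt_succ_iff]
    calc ∑ j : Fin (r + 1), (j : ℕ) * l j ≤ ∑ j : Fin (r + 1), r * l j :=
          Finset.sum_le_sum fun j _ => Nat.mul_le_mul (Nat.lt_succ_iff.mp j.isLt) (le_refl _)
      _ = r * e := by rw [← Finset.mul_sum, hl]
  have hexpand : g ^ e = ∑ i ∈ Finset.range (r * e + 1), c i * φ ^ i := by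
    rw [hgsum, Finset.sum_pow_eq_sum_piAntidiag,
      Finset.piAntidiag_univ_fin_eq_antidiagonalTuple e (r + 1),
      ← Finset.sum_fiberwise_of_maps_to hmaps]
    refine Finset.sum_congr rfl fun i _ => ?_
    rw [hc i, Finset.sum_mul]
    refine Finset.sum_congr rfl fun l hl => ?_
    rw [Finset.mem_filter] at hl
    have hp : ∏ j : Fin (r + 1), (a (j : ℕ) * φ ^ (j : ℕ)) ^ l j
        = (∏ j : Fin (r + 1), a (j : ℕ) ^ l j) * φ ^ (∑ j : Fin (r + 1), (j : ℕ) * l j) := by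
      rw [← Finset.prod_pow_eq_pow_sum, ← Finset.prod_mul_distrib]
      exact Finset.prod_congr rfl fun j _ => by rw [mul_pow, ← pow_mul]
    rw [hp, hl.2, mul_assoc]
  -- value of g
  have hwg : w g = r • μ := by
    have h1 := hhom r (Finset.self_mem_range_succ r) (by rw [har]; exact one_ne_zero)
    rw [har, one_mul, AddValuation.map_pow, hwφ] at h1
    exact h1.symm
  -- values of the coefficients a
  have hua : ∀ j : Fin (r + 1), a (j : ℕ) ≠ 0 → u (a (j : ℕ)) + (j : ℕ) • μ = r • μ := by
    intro j hj
    have h1 := hhom (j : ℕ) (Finset.mem_range.mpr j.isLt) hj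
    rw [AddValuation.map_mul, AddValuation.map_pow, hwφ, hwg, hwu _ (hdeg _)] at h1
    exact h1
  have hwa : ∀ j : Fin (r + 1), a (j : ℕ) ≠ 0 → w (a (j : ℕ)) + (j : ℕ) • μ = r • μ := by
    intro j hj
    rw [hwu _ (hdeg _)]
    exact hua j hj
  -- natural number casts have nonnegative value
  have hnat : ∀ (v : AddValuation (Polynomial K) (WithTop Γ)) (n : ℕ),
      (0 : WithTop Γ) ≤ v ((n : Polynomial K)) := by
    intro v n
    induction n with
    | zero => simp [v.map_zero]
    | succ n ih =>
      push_cast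
      exact v.map_le_add ih (le_of_eq v.map_one.symm)
  -- lower bound for each term of c i
  have hterm : ∀ (v : AddValuation (Polynomial K) (WithTop Γ)),
      (∀ j : Fin (r + 1), a (j : ℕ) ≠ 0 → v (a (j : ℕ)) + (j : ℕ) • μ = r • μ) →
      ∀ i : ℕ, ∀ l ∈ (Finset.Nat.antidiagonalTuple (r + 1) e).filter
          (fun l => ∑ j : Fin (r + 1), (j : ℕ) * l j = i),
        (e * r) • μ ≤ v ((Nat.multinomial Finset.univ l : Polynomial K) *
          ∏ j : Fin (r + 1), a (j : ℕ) ^ l j) + i • μ := by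
    intro v hva i l hl
    rw [Finset.mem_filter, Finset.Nat.mem_antidiagonalTuple] at hl
    by_cases hz : ∃ j : Fin (r + 1), l j ≠ 0 ∧ a (j : ℕ) = 0
    · obtain ⟨j, hj0, hj⟩ := hz
      have hzero : (∏ j : Fin (r + 1), a (j : ℕ) ^ l j) = 0 :=
        Finset.prod_eq_zero (Finset.mem_univ j) (by rw [hj, zero_pow hj0])
      rw [hzero, mul_zero, v.map_zero, top_add]
      exact le_top
    · push_neg at hz
      have key : ∑ j : Fin (r + 1), l j • (v (a (j : ℕ)) + (j : ℕ) • μ) = (e * r) • μ := by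
        have h1 : ∀ j : Fin (r + 1),
            l j • (v (a (j : ℕ)) + (j : ℕ) • μ) = l j • ((r : ℕ) • μ) := by
          intro j
          by_cases h0 : l j = 0
          · simp [h0]
          · rw [hva j (hz j h0)]
        rw [Finset.sum_congr rfl fun j _ => h1 j, ← Finset.sum_smul, hl.1, smul_smul]
      have hsum : (∑ j : Fin (r + 1), l j • v (a (j : ℕ))) + i • μ = (e * r) • μ := by
        rw [← key, ← hl.2, Finset.sum_smul, ← Finset.sum_add_distrib]
        refine Finset.sum_congr rfl fun j _ => ?_
        rw [smul_add, smul_smul, mul_comm]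
      rw [v.map_mul, addval_prod]
      have hpow : ∀ j : Fin (r + 1), v (a (j : ℕ) ^ l j) = l j • v (a (j : ℕ)) :=
        fun j => v.map_pow _ _
      rw [Finset.sum_congr rfl fun j _ => hpow j, add_assoc, hsum]
      calc (e * r) • μ = 0 + (e * r) • μ := (zero_add _).symm
        _ ≤ v ((Nat.multinomial Finset.univ l : Polynomial K)) + (e * r) • μ :=
          add_le_add_left (hnat v _) _
  -- lower bound for c i
  have hbound : ∀ (v : AddValuation (Polynomial K) (WithTop Γ)),
      (∀ j : Fin (r + 1), a (j : ℕ) ≠ 0 → v (a (j : ℕ)) + (j : ℕ) • μ = r • μ) →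
      ∀ i : ℕ, (e * r) • μ ≤ v (c i) + i • μ := by
    intro v hva i
    rw [hc i]
    rcases Finset.eq_empty_or_nonempty ((Finset.Nat.antidiagonalTuple (r + 1) e).filter
        (fun l => ∑ j : Fin (r + 1), (j : ℕ) * l j = i)) with hF | hF
    · rw [hF, Finset.sum_empty, v.map_zero, top_add]
      exact le_top
    · obtain ⟨l0, hl0, hmin⟩ := Finset.exists_mem_eq_inf _ hF
        (fun l => v ((Nat.multinomial Finset.univ l : Polynomial K) *
          ∏ j : Fin (r + 1), a (j : ℕ) ^ l j))
      refine le_trans (hterm v hva i l0 hl0) (add_le_add_left ?_ _)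
      refine v.map_le_sum fun l hl => ?_
      rw [← hmin]
      exact Finset.inf_le hl
  -- the top coefficient is 1
  have hfilter : (Finset.Nat.antidiagonalTuple (r + 1) e).filter
      (fun l => ∑ j : Fin (r + 1), (j : ℕ) * l j = r * e)
      = {fun j : Fin (r + 1) => if j = Fin.last r then e else 0} := by
    ext l
    simp only [Finset.mem_filter, Finset.Nat.mem_antidiagonalTuple, Finset.mem_singleton]
    constructor
    · rintro ⟨h1, h2⟩
      have hjz : ∀ j : Fin (r + 1), j ≠ Fin.last r → l j = 0 := by
        by_contra hcon
        push_neg at hcon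
        obtain ⟨j0, hj0ne, hj0⟩ := hcon
        have hvne : (j0 : ℕ) ≠ r := by
          intro h
          exact hj0ne (Fin.ext (by rw [Fin.val_last]; exact h))
        have hvlt : (j0 : ℕ) < r := lt_of_le_of_ne (Nat.lt_succ_iff.mp j0.isLt) hvne
        have hlt : ∑ j : Fin (r + 1), (j : ℕ) * l j < ∑ j : Fin (r + 1), r * l j := by
          refine Finset.sum_lt_sum
            (fun j _ => Nat.mul_le_mul (Nat.lt_succ_iff.mp j.isLt) (le_refl _))
            ⟨j0, Finset.mem_univ _, ?_⟩
          exact mul_lt_mul_of_pos_right hvlt (Nat.pos_of_ne_zero hj0)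
        rw [h2, ← Finset.mul_sum, h1] at hlt
        exact lt_irrefl _ hlt
      have hlast : l (Fin.last r) = e := by
        rw [← h1]
        exact (Finset.sum_eq_single_of_mem (Fin.last r) (Finset.mem_univ _)
          fun j _ hj => hjz j hj).symm
      funext j
      by_cases hj : j = Fin.last r
      · rw [hj, if_pos rfl, hlast]
      · rw [if_neg hj]
        exact hjz j hj
    · rintro rfl
      refine ⟨by simp, ?_⟩
      have hmul : ∀ j : Fin (r + 1), (j : ℕ) * (if j = Fin.last r then e else 0)
          = if j = Fin.last r then r * e else 0 := by
        intro j
        split_ifs with h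
        · rw [h, Fin.val_last]
        · rw [mul_zero]
      rw [Finset.sum_congr rfl fun j _ => hmul j]
      simp
  have hcre : c (r * e) = 1 := by
    rw [hc, hfilter, Finset.sum_singleton]
    have hm : Nat.multinomial Finset.univ (fun j : Fin (r + 1) =>
        if j = Fin.last r then e else 0) = 1 := by
      simp only [Nat.multinomial]
      have hs : (∑ j : Fin (r + 1), if j = Fin.last r then e else 0) = e := by simp
      have hp : (∏ j : Fin (r + 1),
          Nat.factorial (if j = Fin.last r then e else 0)) = Nat.factorial e := by
        simp [apply_ite Nat.factorial]
      rw [hs, hp, Nat.div_self (Nat.factorial_pos e)]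
    have hprod : (∏ j : Fin (r + 1), a (j : ℕ) ^ (if j = Fin.last r then e else 0)) = 1 := by
      have h1 : ∀ j : Fin (r + 1), a (j : ℕ) ^ (if j = Fin.last r then e else 0)
          = if j = Fin.last r then a r ^ e else 1 := by
        intro j
        split_ifs with h
        · rw [h, Fin.val_last]
        · rw [pow_zero]
      rw [Finset.prod_congr rfl fun j _ => h1 j, Finset.prod_ite_eq' Finset.univ (Fin.last r)
        (fun _ => a r ^ e), if_pos (Finset.mem_univ _), har, one_pow]
    rw [hm, hprod, Nat.cast_one, one_mul]
  -- value of g^e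
  have hwge : w (g ^ e) = (e * r) • μ := by
    rw [AddValuation.map_pow, hwg, smul_smul]
  have hmem : r * e ∈ Finset.range (r * e + 1) := Finset.self_mem_range_succ _
  refine ⟨hexpand, ?_, ?_⟩
  · simp only [hwφ]
    rw [hwge]
    refine le_antisymm (Finset.le_inf fun i _ => hbound u hua i) ?_
    refine le_trans (Finset.inf_le hmem) (le_of_eq ?_)
    rw [hcre, u.map_one, zero_add, mul_comm]
  · simp only [hwφ]
    rw [hwge]
    refine le_antisymm (Finset.le_inf fun i _ => hbound w hwa i) ?_
    refine le_trans (Finset.inf_le hmem) (le_of_eq ?_)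
    rw [hcre, w.map_one, zero_add, mul_comm]
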